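/- arXiv:2112.14178 — 4 statements merged into one kernel-verified Lean document; each statement's English description precedes it below -/
import Mathlib

section
/- The function f(h₀) = ∫_{B_{h₀}} (h₀ - h(x)) dx / h₀ is nonpositive on [h_min, h_max], satisfies f(h_max) = 0, and is strictly monotone increasing with derivative f'(h₀) = ∫_{B_{h₀}} h(x) dx / h₀², where B_{h₀} = {x ∈ [-1,1] : h(x) > h₀}. -/
open MeasureTheory Real Set

variable {h : ℝ → ℝ}

-- measurability of B t
lemma Bmeas (hcont : ContinuousOn h (Icc (-1) 1)) (t : ℝ) :
    MeasurableSet {x ∈ Icc (-1 : ℝ) 1 | t < h x} := by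
  obtain ⟨u, hu, huv⟩ := (continuousOn_iff'.1 hcont) (Ioi t) isOpen_Ioi
  have : {x ∈ Icc (-1 : ℝ) 1 | t < h x} = u ∩ Icc (-1) 1 := by
    rw [← huv]; ext x; simp only [mem_inter_iff, mem_setOf_eq, mem_preimage, mem_Ioi] at *; constructor <;> intro hx <;> exact ⟨hx.2, hx.1⟩
  rw [this]
  exact hu.measurableSet.inter measurableSet_Icc

lemma Bsub (t : ℝ) : {x ∈ Icc (-1 : ℝ) 1 | t < h x} ⊆ Icc (-1 : ℝ) 1 := fun x hx => hx.1

lemma Bvol_lt (t : ℝ) : volume {x ∈ Icc (-1 : ℝ) 1 | t < h x} < ⊤ :=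
  lt_of_le_of_lt (measure_mono (Bsub t)) (by simp)

noncomputable def mfun (h : ℝ → ℝ) (t : ℝ) : ℝ :=
  (volume {x ∈ Icc (-1 : ℝ) 1 | t < h x}).toReal

noncomputable def Gfun (h : ℝ → ℝ) (t : ℝ) : ℝ :=
  ∫ x in Icc (-1 : ℝ) 1, max (h x - t) 0

lemma Bmono {a b : ℝ} (hab : a ≤ b) :
    {x ∈ Icc (-1 : ℝ) 1 | b < h x} ⊆ {x ∈ Icc (-1 : ℝ) 1 | a < h x} :=
  fun x hx => ⟨hx.1, lt_of_le_of_lt hab hx.2⟩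

lemma manti : Antitone (mfun h) := fun a b hab =>
  (ENNReal.toReal_le_toReal (Bvol_lt b).ne (Bvol_lt a).ne).2 (measure_mono (Bmono hab))

open Filter Topology in
lemma mcont (hcont : ContinuousOn h (Icc (-1) 1)) (t : ℝ)
    (hlev : volume {x ∈ Icc (-1 : ℝ) 1 | h x = t} = 0) :
    ContinuousAt (mfun h) t := by
  rw [Metric.continuousAt_iff]
  intro ε hε
  set A : ℕ → Set ℝ := fun n =>
    {x ∈ Icc (-1 : ℝ) 1 | t - 1/(n+1) < h x} \ {x ∈ Icc (-1 : ℝ) 1 | t + 1/(n+1) < h x} with hA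
  have hAmeas : ∀ n, MeasurableSet (A n) := fun n =>
    ((Bmeas hcont _).diff (Bmeas hcont _))
  have hAanti : Antitone A := by
    intro n m hnm
    have h1 : (1 : ℝ)/(m+1) ≤ 1/(n+1) := by
      apply one_div_le_one_div_of_le (by positivity) (by exact_mod_cast by omega)
    intro x hx
    refine ⟨Bmono (by linarith) hx.1, fun hc => hx.2 (Bmono (by linarith) hc)⟩
  have hAint : ⋂ n, A n = {x ∈ Icc (-1 : ℝ) 1 | h x = t} := by
    ext x
    simp only [hA, mem_iInter, mem_diff, mem_setOf_eq, not_and, not_lt]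
    constructor
    · intro hx
      have hx0 := hx 0
      refine ⟨hx0.1.1, le_antisymm ?_ ?_⟩
      · by_contra hc
        push_neg at hc
        obtain ⟨n, hn⟩ := exists_nat_one_div_lt (show (0:ℝ) < h x - t by linarith)
        have := (hx n).2 hx0.1.1
        linarith
      · by_contra hc
        push_neg at hc
        obtain ⟨n, hn⟩ := exists_nat_one_div_lt (show (0:ℝ) < t - h x by linarith)
        have := (hx n).1.2
        linarith
    · rintro ⟨hxI, hxe⟩ n
      have : (0:ℝ) < 1/(n+1) := by positivity
      exact ⟨⟨hxI, by linarith⟩, fun _ => by linarith⟩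
  have htend : Tendsto (volume ∘ A) atTop (𝓝 0) := by
    have := tendsto_measure_iInter_atTop (μ := volume) (s := A)
      (fun n => (hAmeas n).nullMeasurableSet) hAanti
      ⟨0, (lt_of_le_of_lt (measure_mono (diff_subset.trans (Bsub _))) (by simp)).ne⟩
    rwa [hAint, hlev] at this
  have hev : ∀ᶠ n in atTop, volume (A n) < ENNReal.ofReal ε :=
    Filter.Tendsto.eventually_lt_const (ENNReal.ofReal_pos.2 hε) htend
  obtain ⟨n, hn⟩ := hev.exists
  refine ⟨1/(n+1), by positivity, fun s hs => ?_⟩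
  rw [Real.dist_eq] at hs ⊢
  set δ : ℝ := 1/(n+1) with hδ
  have hδpos : (0:ℝ) < δ := by positivity
  have key : mfun h (t - δ) - mfun h (t + δ) = (volume (A n)).toReal := by
    have hsub : {x ∈ Icc (-1 : ℝ) 1 | t + δ < h x} ⊆ {x ∈ Icc (-1 : ℝ) 1 | t - δ < h x} :=
      Bmono (by linarith)
    have hd := measure_diff hsub (Bmeas hcont (t + δ)).nullMeasurableSet (Bvol_lt (t + δ)).ne
    have : A n = {x ∈ Icc (-1 : ℝ) 1 | t - δ < h x} \ {x ∈ Icc (-1 : ℝ) 1 | t + δ < h x} := by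
      rw [hA]
    rw [this, hd, ENNReal.toReal_sub_of_le (measure_mono hsub) (Bvol_lt _).ne]
    rfl
  have habs := abs_lt.1 hs
  have h1 : mfun h s ≤ mfun h (t - δ) := manti (by linarith [habs.1])
  have h2 : mfun h (t + δ) ≤ mfun h s := manti (by linarith [habs.2])
  have h3 : mfun h t ≤ mfun h (t - δ) := manti (by linarith)
  have h4 : mfun h (t + δ) ≤ mfun h t := manti (by linarith)
  have hlt : (volume (A n)).toReal < ε := ENNReal.toReal_lt_of_lt_ofReal hn
  rw [abs_lt]
  constructor <;> linarith [key]

lemma hInt (hcont : ContinuousOn h (Icc (-1) 1)) :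
    IntegrableOn h (Icc (-1 : ℝ) 1) volume :=
  hcont.integrableOn_Icc

lemma maxInt (hcont : ContinuousOn h (Icc (-1) 1)) (t : ℝ) :
    IntegrableOn (fun x => max (h x - t) 0) (Icc (-1 : ℝ) 1) volume :=
  ((hcont.sub continuousOn_const).sup continuousOn_const).integrableOn_Icc

/-- split of an integral over Icc into B t and its complement -/
lemma split (hcont : ContinuousOn h (Icc (-1) 1)) (t : ℝ) {g : ℝ → ℝ}
    (hg : IntegrableOn g (Icc (-1 : ℝ) 1) volume) :
    ∫ x in Icc (-1 : ℝ) 1, g x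
      = (∫ x in {x ∈ Icc (-1 : ℝ) 1 | t < h x}, g x)
        + ∫ x in Icc (-1 : ℝ) 1 \ {x ∈ Icc (-1 : ℝ) 1 | t < h x}, g x := by
  rw [← integral_inter_add_diff (Bmeas hcont t) hg,
    inter_eq_self_of_subset_right (Bsub t)]

/-- `∫_{B t} (h - t) = G t` -/
lemma GB (hcont : ContinuousOn h (Icc (-1) 1)) (t : ℝ) :
    ∫ x in {x ∈ Icc (-1 : ℝ) 1 | t < h x}, (h x - t) = Gfun h t := by
  rw [Gfun, split hcont t (maxInt hcont t)]
  have h1 : ∫ x in {x ∈ Icc (-1 : ℝ) 1 | t < h x}, max (h x - t) 0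
      = ∫ x in {x ∈ Icc (-1 : ℝ) 1 | t < h x}, (h x - t) := by
    apply setIntegral_congr_fun (Bmeas hcont t)
    intro x hx
    exact max_eq_left (by linarith [hx.2])
  have h2 : ∫ x in Icc (-1 : ℝ) 1 \ {x ∈ Icc (-1 : ℝ) 1 | t < h x}, max (h x - t) 0 = 0 := by
    rw [setIntegral_congr_fun (measurableSet_Icc.diff (Bmeas hcont t))
      (g := fun _ => (0:ℝ)) ?_, integral_zero]
    intro x hx
    have : ¬ t < h x := fun hc => hx.2 ⟨hx.1, hc⟩
    exact max_eq_right (by linarith)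
  rw [h1, h2, add_zero]

lemma mpos_eq (hcont : ContinuousOn h (Icc (-1) 1)) (t : ℝ) :
    ∫ x in {x ∈ Icc (-1 : ℝ) 1 | t < h x}, (t : ℝ) = t * mfun h t := by
  rw [setIntegral_const, mfun, smul_eq_mul, mul_comm]
  rfl

/-- `∫_{B t} h = G t + t * m t` -/
lemma intBh (hcont : ContinuousOn h (Icc (-1) 1)) (t : ℝ) :
    ∫ x in {x ∈ Icc (-1 : ℝ) 1 | t < h x}, h x = Gfun h t + t * mfun h t := by
  have hint : IntegrableOn h {x ∈ Icc (-1 : ℝ) 1 | t < h x} volume :=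
    (hInt hcont).mono_set (Bsub t)
  have : ∫ x in {x ∈ Icc (-1 : ℝ) 1 | t < h x}, h x
      = (∫ x in {x ∈ Icc (-1 : ℝ) 1 | t < h x}, (h x - t))
        + ∫ x in {x ∈ Icc (-1 : ℝ) 1 | t < h x}, (t:ℝ) :=
    calc ∫ x in {x ∈ Icc (-1 : ℝ) 1 | t < h x}, h x
        = ∫ x in {x ∈ Icc (-1 : ℝ) 1 | t < h x}, ((h x - t) + t) := by congr 1 with x; ring
      _ = _ := integral_add (hint.sub (integrableOn_const (Bvol_lt t).ne))
          (integrableOn_const (Bvol_lt t).ne)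
  rw [this, GB hcont t, mpos_eq hcont t]

/-- f's numerator equals `-G` -/
lemma fnum (hcont : ContinuousOn h (Icc (-1) 1)) (t : ℝ) :
    ∫ x in {x ∈ Icc (-1 : ℝ) 1 | t < h x}, (t - h x) = -(Gfun h t) := by
  rw [← GB hcont t, ← integral_neg]
  congr 1 with x
  ring

lemma Gsand (hcont : ContinuousOn h (Icc (-1) 1)) {s t : ℝ} (hst : t < s) :
    -(s - t) * mfun h t ≤ Gfun h s - Gfun h t ∧
    Gfun h s - Gfun h t ≤ -(s - t) * mfun h s := by
  set φ : ℝ → ℝ := fun x => max (h x - s) 0 - max (h x - t) 0 with hφ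
  have hφint : IntegrableOn φ (Icc (-1 : ℝ) 1) volume := (maxInt hcont s).sub (maxInt hcont t)
  have hGdiff : Gfun h s - Gfun h t = ∫ x in Icc (-1 : ℝ) 1, φ x := by
    rw [Gfun, Gfun, ← integral_sub (maxInt hcont s) (maxInt hcont t)]
  constructor
  · -- lower bound, split at B t
    rw [hGdiff, split hcont t hφint]
    have h2 : ∫ x in Icc (-1 : ℝ) 1 \ {x ∈ Icc (-1 : ℝ) 1 | t < h x}, φ x = 0 := by
      rw [setIntegral_congr_fun (measurableSet_Icc.diff (Bmeas hcont t))
        (g := fun _ => (0:ℝ)) ?_, integral_zero]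
      intro x hx
      have hle : h x ≤ t := not_lt.1 fun hc => hx.2 ⟨hx.1, hc⟩
      simp only [hφ]
      rw [max_eq_right (by linarith), max_eq_right (by linarith)]
      ring
    rw [h2, add_zero]
    have h1 : ∫ x in {x ∈ Icc (-1 : ℝ) 1 | t < h x}, (t - s)
        ≤ ∫ x in {x ∈ Icc (-1 : ℝ) 1 | t < h x}, φ x := by
      apply setIntegral_mono_on (integrableOn_const (Bvol_lt t).ne)
        (hφint.mono_set (Bsub t)) (Bmeas hcont t)
      intro x hx
      simp only [hφ]
      rw [max_eq_left (show (0:ℝ) ≤ h x - t by linarith [hx.2])]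
      have := le_max_left (h x - s) 0
      linarith
    rw [setIntegral_const, smul_eq_mul] at h1
    have hmt : mfun h t = (volume {x ∈ Icc (-1:ℝ) 1 | t < h x}).toReal := rfl
    rw [hmt]
    calc -(s - t) * (volume {x ∈ Icc (-1:ℝ) 1 | t < h x}).toReal
        = (volume {x ∈ Icc (-1:ℝ) 1 | t < h x}).toReal * (t - s) := by ring
      _ ≤ _ := h1
  · -- upper bound, split at B s
    rw [hGdiff, split hcont s hφint]
    have h2 : ∫ x in Icc (-1 : ℝ) 1 \ {x ∈ Icc (-1 : ℝ) 1 | s < h x}, φ x ≤ 0 := by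
      apply setIntegral_nonpos (measurableSet_Icc.diff (Bmeas hcont s))
      intro x hx
      have hle : h x ≤ s := not_lt.1 fun hc => hx.2 ⟨hx.1, hc⟩
      simp only [hφ]
      rw [max_eq_right (by linarith)]
      have := le_max_right (h x - t) 0
      linarith
    have h1 : ∫ x in {x ∈ Icc (-1 : ℝ) 1 | s < h x}, φ x
        = ∫ x in {x ∈ Icc (-1 : ℝ) 1 | s < h x}, (t - s) := by
      apply setIntegral_congr_fun (Bmeas hcont s)
      intro x hx
      simp only [hφ]
      rw [max_eq_left (by linarith [hx.2]), max_eq_left (by linarith [hx.2])]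
      ring
    rw [h1, setIntegral_const, smul_eq_mul]
    have hms : mfun h s = volume.real {x ∈ Icc (-1:ℝ) 1 | s < h x} := rfl
    have : volume.real {x ∈ Icc (-1:ℝ) 1 | s < h x} * (t - s)
        = -(s - t) * mfun h s := by rw [hms]; ring
    linarith

open Filter Topology in
lemma GHasDeriv (hcont : ContinuousOn h (Icc (-1) 1))
    (hlevel : ∀ c : ℝ, volume {x ∈ Icc (-1 : ℝ) 1 | h x = c} = 0) (t : ℝ) :
    HasDerivAt (Gfun h) (-(mfun h t)) t := by
  rw [hasDerivAt_iff_tendsto_slope]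
  have hm := mcont hcont t (hlevel t)
  have hcmin : ContinuousAt (fun s : ℝ => min s t) t :=
    (continuous_id.min continuous_const).continuousAt
  have hcmax : ContinuousAt (fun s : ℝ => max s t) t :=
    (continuous_id.max continuous_const).continuousAt
  have hlow : Tendsto (fun s => -(mfun h (min s t))) (𝓝[≠] t) (𝓝 (-(mfun h t))) := by
    have h1 : Tendsto (fun s : ℝ => min s t) (𝓝 t) (𝓝 t) := by
      simpa [min_self] using hcmin.tendsto
    exact ((hm.tendsto.comp h1).neg).mono_left nhdsWithin_le_nhds
  have hhigh : Tendsto (fun s => -(mfun h (max s t))) (𝓝[≠] t) (𝓝 (-(mfun h t))) := by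
    have h1 : Tendsto (fun s : ℝ => max s t) (𝓝 t) (𝓝 t) := by
      simpa [max_self] using hcmax.tendsto
    exact ((hm.tendsto.comp h1).neg).mono_left nhdsWithin_le_nhds
  have hbound : ∀ s : ℝ, s ≠ t →
      -(mfun h (min s t)) ≤ slope (Gfun h) t s ∧
      slope (Gfun h) t s ≤ -(mfun h (max s t)) := by
    intro s hs
    rcases lt_or_gt_of_ne hs with hlt | hgt
    · -- s < t
      obtain ⟨hl, hr⟩ := Gsand hcont hlt
      rw [slope_def_field, min_eq_left hlt.le, max_eq_right hlt.le]
      have hneg : s - t < 0 := by linarith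
      constructor
      · rw [le_div_iff_of_neg hneg]
        nlinarith
      · rw [div_le_iff_of_neg hneg]
        nlinarith
    · -- t < s
      obtain ⟨hl, hr⟩ := Gsand hcont hgt
      rw [slope_def_field, min_eq_right hgt.le, max_eq_left hgt.le]
      have hpos : 0 < s - t := by linarith
      constructor
      · rw [le_div_iff₀ hpos]
        nlinarith
      · rw [div_le_iff₀ hpos]
        nlinarith
  apply tendsto_of_tendsto_of_tendsto_of_le_of_le' hlow hhigh
  · filter_upwards [eventually_mem_nhdsWithin] with s hs
    exact (hbound s hs).1
  · filter_upwards [eventually_mem_nhdsWithin] with s hs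
    exact (hbound s hs).2

lemma mpos (hcont : ContinuousOn h (Icc (-1) 1)) {t : ℝ}
    (ht : t < sSup (h '' Icc (-1) 1)) : 0 < mfun h t := by
  have hne : (h '' Icc (-1 : ℝ) 1).Nonempty := (nonempty_Icc.2 (by norm_num)).image h
  have hcomp : IsCompact (h '' Icc (-1 : ℝ) 1) := isCompact_Icc.image_of_continuousOn hcont
  obtain ⟨x₀, hx₀, hhx₀⟩ := hcomp.sSup_mem hne
  have hcw : ContinuousWithinAt h (Icc (-1 : ℝ) 1) x₀ := hcont x₀ hx₀
  have hmem : h ⁻¹' (Ioi t) ∈ nhdsWithin x₀ (Icc (-1 : ℝ) 1) :=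
    hcw (Ioi_mem_nhds (by rw [hhx₀]; exact ht))
  rw [mem_nhdsWithin] at hmem
  obtain ⟨u, huo, hxu, hsub⟩ := hmem
  obtain ⟨δ, hδ, hball⟩ := Metric.isOpen_iff.1 huo x₀ hxu
  set a : ℝ := max (-1) (x₀ - δ/2) with ha
  set b : ℝ := min 1 (x₀ + δ/2) with hb
  have hx₀I := hx₀
  rw [mem_Icc] at hx₀I
  have hab : a < b := by
    rw [ha, hb, max_lt_iff, lt_min_iff, lt_min_iff]
    refine ⟨⟨by norm_num, by linarith⟩, by linarith, by linarith⟩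
  have hsubB : Icc a b ⊆ {x ∈ Icc (-1 : ℝ) 1 | t < h x} := by
    intro y hy
    rw [mem_Icc] at hy
    have hyI : y ∈ Icc (-1 : ℝ) 1 := by
      rw [mem_Icc]
      constructor
      · exact le_trans (le_max_left _ _) hy.1
      · exact le_trans hy.2 (min_le_left _ _)
    have hyb : y ∈ Metric.ball x₀ δ := by
      rw [Metric.mem_ball, Real.dist_eq, abs_lt]
      have h1 : x₀ - δ/2 ≤ y := le_trans (le_max_right _ _) hy.1
      have h2 : y ≤ x₀ + δ/2 := le_trans hy.2 (min_le_right _ _)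
      constructor <;> linarith
    exact ⟨hyI, hsub ⟨hball hyb, hyI⟩⟩
  have hvol : 0 < volume {x ∈ Icc (-1 : ℝ) 1 | t < h x} := by
    calc (0 : ENNReal) < volume (Icc a b) := by
          rw [Real.volume_Icc]
          exact ENNReal.ofReal_pos.2 (by linarith)
      _ ≤ _ := measure_mono hsubB
  exact ENNReal.toReal_pos hvol.ne' (Bvol_lt t).ne

/-- properties of `f(h₀) = ∫_{B_{h₀}} (h₀ - h(x)) dx / h₀`, where
`B_{h₀} = {x ∈ [-1,1] : h(x) > h₀}`: nonpositive on `[h_min, h_max]`,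
`f(h_max) = 0`, strictly increasing, with derivative `∫_{B_{h₀}} h / h₀²`. -/
theorem stmt_7 (h : ℝ → ℝ) (hcont : ContinuousOn h (Icc (-1) 1))
    (hpos : ∀ x ∈ Icc (-1 : ℝ) 1, 0 < h x)
    (hlevel : ∀ c : ℝ, volume {x ∈ Icc (-1 : ℝ) 1 | h x = c} = 0) :
    let hmin := sInf (h '' Icc (-1) 1)
    let hmax := sSup (h '' Icc (-1) 1)
    let f : ℝ → ℝ := fun h0 =>
      (∫ x in {x ∈ Icc (-1 : ℝ) 1 | h0 < h x}, (h0 - h x)) / h0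
    (∀ h0 ∈ Icc hmin hmax, f h0 ≤ 0) ∧
    f hmax = 0 ∧
    StrictMonoOn f (Icc hmin hmax) ∧
    (∀ h0 ∈ Ioo hmin hmax,
      HasDerivAt f ((∫ x in {x ∈ Icc (-1 : ℝ) 1 | h0 < h x}, h x) / h0 ^ 2) h0) := by

  intro hmin hmax f
  have hne : (h '' Icc (-1 : ℝ) 1).Nonempty := (nonempty_Icc.2 (by norm_num)).image h
  have hcomp : IsCompact (h '' Icc (-1 : ℝ) 1) := isCompact_Icc.image_of_continuousOn hcont
  have hminpos : 0 < hmin := by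
    obtain ⟨x₀, hx₀, hhx₀⟩ := hcomp.sInf_mem hne
    rw [show hmin = sInf (h '' Icc (-1) 1) from rfl, ← hhx₀]
    exact hpos x₀ hx₀
  have hle_max : ∀ x ∈ Icc (-1 : ℝ) 1, h x ≤ hmax := fun x hx =>
    le_csSup hcomp.bddAbove (mem_image_of_mem h hx)
  -- f = -G / id
  have hfeq : f = fun t => -(Gfun h t) / t := by
    funext t
    rw [show f t = (∫ x in {x ∈ Icc (-1 : ℝ) 1 | t < h x}, (t - h x)) / t from rfl,
      fnum hcont t]
  -- derivative
  have hDeriv : ∀ h0 ∈ Ioo hmin hmax,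
      HasDerivAt f ((∫ x in {x ∈ Icc (-1 : ℝ) 1 | h0 < h x}, h x) / h0 ^ 2) h0 := by
    intro t ht
    have htpos : 0 < t := lt_trans hminpos ht.1
    have hG := (GHasDeriv hcont hlevel t).neg
    have hid := hasDerivAt_id t
    have hdiv := hG.div hid (ne_of_gt htpos)
    rw [hfeq]
    refine hdiv.congr_deriv ?_
    rw [intBh hcont t]
    simp only [id, Pi.neg_apply]
    field_simp
    ring
  refine ⟨?_, ?_, ?_, hDeriv⟩
  · -- nonpositive
    intro t ht
    have htpos : 0 < t := lt_of_lt_of_le hminpos ht.1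
    have hnum : ∫ x in {x ∈ Icc (-1 : ℝ) 1 | t < h x}, (t - h x) ≤ 0 :=
      setIntegral_nonpos (Bmeas hcont t) (fun x hx => by linarith [hx.2])
    exact div_nonpos_of_nonpos_of_nonneg hnum htpos.le
  · -- f hmax = 0
    have hempty : {x ∈ Icc (-1 : ℝ) 1 | hmax < h x} = ∅ := by
      ext x
      simp only [mem_setOf_eq, mem_empty_iff_false, iff_false, not_and, not_lt]
      exact fun hx => hle_max x hx
    show (∫ x in {x ∈ Icc (-1 : ℝ) 1 | hmax < h x}, (hmax - h x)) / hmax = 0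
    rw [hempty]
    simp
  · -- strict mono
    rcases le_or_gt hmax hmin with hle | hlt
    · intro a ha b hb hab
      exfalso
      have := ha.1; have := ha.2; have := hb.1; have := hb.2
      linarith
    · apply strictMonoOn_of_deriv_pos (convex_Icc hmin hmax)
      · -- continuity
        rw [hfeq]
        apply ContinuousOn.div
        · apply Continuous.continuousOn
          have : ∀ t, ContinuousAt (Gfun h) t := fun t =>
            (GHasDeriv hcont hlevel t).continuousAt
          exact (continuous_iff_continuousAt.2 this).neg
        · exact continuousOn_id
        · intro x hx
          exact ne_of_gt (lt_of_lt_of_le hminpos hx.1)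
      · intro x hx
        rw [interior_Icc] at hx
        have hxpos : 0 < x := lt_trans hminpos hx.1
        have hd := hDeriv x hx
        rw [hd.deriv]
        apply div_pos ?_ (pow_pos hxpos 2)
        have hmono : ∫ y in {y ∈ Icc (-1 : ℝ) 1 | x < h y}, (x : ℝ)
            ≤ ∫ y in {y ∈ Icc (-1 : ℝ) 1 | x < h y}, h y :=
          setIntegral_mono_on (integrableOn_const (Bvol_lt x).ne)
            ((hInt hcont).mono_set (Bsub x)) (Bmeas hcont x)
            (fun y hy => hy.2.le)
        rw [mpos_eq hcont x] at hmono
        exact lt_of_lt_of_le (mul_pos hxpos (mpos hcont hx.2)) hmono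
end

section
/- For K = 2, with h(x) = x⃗ Q^{-1} x⃗^T where x⃗ = (1, x, x²) and Q the moment matrix of U[-1,1], the critical variance σ²_min = 2/(∫_{-1}^1 h(x) dx / h_min - 2) equals 3/2. -/
open MeasureTheory Real Set Matrix

/-- Moment matrix of `U[-1,1]` for `K = 2`. -/
noncomputable def Q2 : Matrix (Fin 3) (Fin 3) ℝ :=
  !![1, 0, 1/3; 0, 1/3, 0; 1/3, 0, 1/5]

/-- `h(x) = x⃗ Q⁻¹ x⃗ᵀ` for `x⃗ = (1, x, x²)`. -/
noncomputable def hfun2 (x : ℝ) : ℝ :=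
  ![1, x, x ^ 2] ⬝ᵥ (Q2⁻¹ *ᵥ ![1, x, x ^ 2])

lemma Q2_inv : Q2⁻¹ = !![9/4, 0, -15/4; 0, 3, 0; -15/4, 0, 45/4] := by
  apply Matrix.inv_eq_right_inv
  ext i j
  fin_cases i <;> fin_cases j <;>
    simp [Q2, Matrix.mul_apply, Fin.sum_univ_three] <;> norm_num

lemma hfun2_eq (x : ℝ) : hfun2 x = 9/4 - 9/2 * x^2 + 45/4 * x^4 := by
  simp [hfun2, Q2_inv, Matrix.mulVec, dotProduct, Fin.sum_univ_three]
  ring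

lemma hfun2_sInf : sInf (hfun2 '' Icc (-1) 1) = 9/5 := by
  apply IsLeast.csInf_eq
  constructor
  · refine ⟨Real.sqrt (1/5), ?_, ?_⟩
    · constructor
      · nlinarith [Real.sqrt_nonneg (1/5 : ℝ)]
      · rw [show (1:ℝ) = Real.sqrt 1 from (Real.sqrt_one).symm]
        exact Real.sqrt_le_sqrt (by norm_num)
    · have h : Real.sqrt (1/5) ^ 2 = 1/5 := Real.sq_sqrt (by norm_num)
      rw [hfun2_eq]
      nlinarith [h]
  · rintro y ⟨x, -, rfl⟩
    rw [hfun2_eq]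
    nlinarith [sq_nonneg (x^2 - 1/5)]

lemma hfun2_integral : (∫ x in (-1 : ℝ)..1, hfun2 x) = 6 := by
  have h0 : (∫ x in (-1 : ℝ)..1, hfun2 x) =
      ∫ x in (-1 : ℝ)..1, (9/4 - 9/2 * x^2 + 45/4 * x^4) := by
    apply intervalIntegral.integral_congr
    intro x _
    exact hfun2_eq x
  have ic : IntervalIntegrable (fun _ : ℝ => (9/4 : ℝ)) volume (-1) 1 :=
    intervalIntegrable_const
  have i2 : IntervalIntegrable (fun x : ℝ => 9/2 * x^2) volume (-1) 1 :=
    (intervalIntegral.intervalIntegrable_pow 2).const_mul _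
  have i4 : IntervalIntegrable (fun x : ℝ => 45/4 * x^4) volume (-1) 1 :=
    (intervalIntegral.intervalIntegrable_pow 4).const_mul _
  rw [h0, intervalIntegral.integral_add (ic.sub i2) i4,
    intervalIntegral.integral_sub ic i2,
    intervalIntegral.integral_const_mul, intervalIntegral.integral_const_mul,
    integral_pow, integral_pow]
  norm_num

/-- for `K = 2`, the critical variance
`σ²_min = 2/(∫ h / h_min - 2)` equals `3/2`. -/
theorem stmt_12 :
    let hmin := sInf (hfun2 '' Icc (-1) 1)
    2 / ((∫ x in (-1 : ℝ)..1, hfun2 x) / hmin - 2) = 3 / 2 := by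
  intro hmin
  have : hmin = 9/5 := hfun2_sInf
  rw [this, hfun2_integral]
  norm_num
end

section
/- Phase transition, low-variance case: if σ² ≤ σ²_min = -2/f(h_min), then π*(x) = h(x)/∫_{-1}^1 h(t) dt minimizes R_π = (σ²/2) ∫_{-1}^1 h(x)/π(x) dx + sup_{x∈[-1,1]} h(x)/π(x) over all densities π on [-1,1] with π > 0. -/
open MeasureTheory Real Set

lemma aux_pt (σ2 c I M a q : ℝ) (hq : 0 < q) (hc : 0 ≤ c)
    (hM : a / q ≤ M) (hca : σ2 ≤ 2 * (c * a)) :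
    2*c*I*a + M*(σ2/2) ≤ σ2/2 * (a/q) + M*c*a + c*I^2*q := by
  have h1 : 0 ≤ (M - a/q) * (c*a - σ2/2) :=
    mul_nonneg (by linarith) (by linarith)
  have h2 : c*(a/q)*a + c*I^2*q - 2*c*I*a = c*q*(a/q - I)^2 := by
    field_simp
    ring
  have h3 : 0 ≤ c*q*(a/q - I)^2 := by positivity
  nlinarith [h1, h2, h3]

/-- Theorem 2(i): if `σ² ≤ σ²_min = -2/f(h_min)`, then
`p*(x) = h(x)/∫h` minimizes `R_p = (σ²/2) ∫ h/p + sup_{x∈[-1,1]} h(x)/p(x)` over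
densities `p > 0` on `[-1,1]`. -/
theorem stmt_14 (h : ℝ → ℝ) (hcont : ContinuousOn h (Icc (-1) 1))
    (hpos : ∀ x ∈ Icc (-1 : ℝ) 1, 0 < h x)
    (σ2 : ℝ) (hσ2 : 0 ≤ σ2) :
    let hmin := sInf (h '' Icc (-1) 1)
    let f : ℝ → ℝ := fun h0 =>
      (∫ x in {x ∈ Icc (-1 : ℝ) 1 | h0 < h x}, (h0 - h x)) / h0
    let R : (ℝ → ℝ) → ℝ := fun p =>
      (σ2 / 2) * (∫ x in (-1 : ℝ)..1, h x / p x)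
        + sSup ((fun x => h x / p x) '' Icc (-1) 1)
    let pstar : ℝ → ℝ := fun x => h x / ∫ t in (-1 : ℝ)..1, h t
    σ2 ≤ (-2 : ℝ) / f hmin →
      ∀ p : ℝ → ℝ, Measurable p → (∀ x ∈ Icc (-1 : ℝ) 1, 0 < p x) →
        (∫ x in (-1 : ℝ)..1, p x) = 1 →
        IntervalIntegrable (fun x => h x / p x) volume (-1) 1 →
        BddAbove ((fun x => h x / p x) '' Icc (-1) 1) →
        R pstar ≤ R p := by
  intro hmin f R pstar hσ p pmeas ppos hp1 hint hbdd
  have h11 : (-1:ℝ) ≤ 1 := by norm_num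
  have hu : uIcc (-1:ℝ) 1 = Icc (-1) 1 := uIcc_of_le h11
  have hIcc_ne : (Icc (-1:ℝ) 1).Nonempty := ⟨0, by norm_num⟩
  have hhi : IntervalIntegrable h volume (-1) 1 :=
    (hu ▸ hcont).intervalIntegrable
  set I := ∫ t in (-1:ℝ)..1, h t with hIdef
  have hIpos : 0 < I :=
    intervalIntegral.intervalIntegral_pos_of_pos_on hhi
      (fun x hx => hpos x (Ioo_subset_Icc_self hx)) (by norm_num)
  -- facts about hmin
  have hcomp : IsCompact (h '' Icc (-1:ℝ) 1) := isCompact_Icc.image_of_continuousOn hcont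
  have hne : (h '' Icc (-1:ℝ) 1).Nonempty := hIcc_ne.image h
  obtain ⟨x0, hx0, hx0e⟩ := hcomp.sInf_mem hne
  have hminpos : 0 < hmin := by
    have := hpos x0 hx0; rw [hx0e] at this; exact this
  have hminle : ∀ x ∈ Icc (-1:ℝ) 1, hmin ≤ h x := fun x hx =>
    csInf_le hcomp.bddBelow (mem_image_of_mem h hx)
  -- integral of h over Icc
  have hInt : IntegrableOn h (Icc (-1:ℝ) 1) := hcont.integrableOn_Icc
  have hIccInt : ∫ x in Icc (-1:ℝ) 1, h x = I := by
    rw [hIdef, intervalIntegral.integral_of_le h11, ← integral_Icc_eq_integral_Ioc]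
  -- compute f hmin
  have hTclosed : IsClosed (Icc (-1:ℝ) 1 ∩ h ⁻¹' Iic hmin) :=
    hcont.preimage_isClosed_of_isClosed isClosed_Icc isClosed_Iic
  have hTmeas : MeasurableSet (Icc (-1:ℝ) 1 ∩ h ⁻¹' Iic hmin) := hTclosed.measurableSet
  have hSeq : {x ∈ Icc (-1:ℝ) 1 | hmin < h x}
      = Icc (-1:ℝ) 1 \ (Icc (-1:ℝ) 1 ∩ h ⁻¹' Iic hmin) := by
    ext x
    simp only [mem_setOf_eq, mem_diff, mem_inter_iff, mem_preimage, mem_Iic, not_and, not_le]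
    constructor
    · rintro ⟨hx, hlt⟩; exact ⟨hx, fun _ => hlt⟩
    · rintro ⟨hx, hlt⟩; exact ⟨hx, hlt hx⟩
  have hgInt : IntegrableOn (fun x => hmin - h x) (Icc (-1:ℝ) 1) :=
    (integrableOn_const (by simp [Real.volume_Icc])).sub hInt
  have hTzero : ∫ x in Icc (-1:ℝ) 1 ∩ h ⁻¹' Iic hmin, (hmin - h x) = 0 := by
    rw [setIntegral_congr_fun hTmeas (g := fun _ => (0:ℝ))
      (fun x hx => by
        have h1 : h x ≤ hmin := hx.2
        have h2 : hmin ≤ h x := hminle x hx.1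
        simp [le_antisymm h1 h2])]
    simp
  have hIccg : ∫ x in Icc (-1:ℝ) 1, (hmin - h x) = 2*hmin - I := by
    rw [integral_sub (show Integrable (fun _ => hmin) (volume.restrict (Icc (-1:ℝ) 1)) from integrableOn_const (by simp [Real.volume_Icc])) hInt,
      setIntegral_const, hIccInt, Real.volume_real_Icc]
    norm_num
  have hfval : f hmin = (2*hmin - I)/hmin := by
    show (∫ x in {x ∈ Icc (-1:ℝ) 1 | hmin < h x}, (hmin - h x)) / hmin = _
    rw [hSeq, integral_diff hTmeas hgInt inter_subset_left, hTzero, hIccg, sub_zero]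
  -- key inequality
  have hIge : 2*hmin ≤ I := by
    have hmono : ∫ x in Icc (-1:ℝ) 1, (fun _ => hmin) x ≤ ∫ x in Icc (-1:ℝ) 1, h x :=
      setIntegral_mono_on (integrableOn_const (by simp [Real.volume_Icc]))
        hInt measurableSet_Icc hminle
    rw [hIccInt, setIntegral_const, Real.volume_real_Icc] at hmono
    norm_num at hmono
    linarith
  have key : σ2 * I ≤ 2*hmin + 2*hmin*σ2 := by
    rcases eq_or_lt_of_le hIge with heq | hlt
    · have hf0 : f hmin = 0 := by rw [hfval, ← heq]; simp
      rw [hf0] at hσ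
      simp at hσ
      have : σ2 = 0 := le_antisymm hσ hσ2
      rw [this]; nlinarith
    · have hq : (2*hmin - I)/hmin < 0 := div_neg_of_neg_of_pos (by linarith) hminpos
      rw [hfval] at hσ
      have h2 : (-2 / ((2*hmin - I)/hmin)) * ((2*hmin - I)/hmin)
          ≤ σ2 * ((2*hmin - I)/hmin) := mul_le_mul_of_nonpos_right hσ hq.le
      rw [div_mul_cancel₀ _ hq.ne] at h2
      have h3 : σ2 * ((2*hmin - I)/hmin) * hmin ≤ σ2 * (2*hmin - I) := by
        rw [mul_assoc, div_mul_cancel₀ _ hminpos.ne']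
      nlinarith [mul_le_mul_of_nonneg_right h2 hminpos.le]
  -- the weight c
  set c := (1+σ2)/I with hcdef
  have hc : 0 ≤ c := div_nonneg (by linarith) hIpos.le
  have hca : ∀ x ∈ Icc (-1:ℝ) 1, σ2 ≤ 2*(c * h x) := by
    intro x hx
    have h1 : σ2 * I ≤ 2*((1+σ2) * h x) := by
      nlinarith [hminle x hx, hσ2]
    have h2 : 2*(c * h x) = 2*((1+σ2) * h x) / I := by rw [hcdef]; ring
    rw [h2, le_div_iff₀ hIpos]
    exact h1
  -- p is interval integrable
  have hpint : IntervalIntegrable p volume (-1) 1 := by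
    by_contra hni
    rw [intervalIntegral.integral_undef hni] at hp1
    exact one_ne_zero hp1.symm
  -- abbreviation for the sup
  set M := sSup ((fun x => h x / p x) '' Icc (-1:ℝ) 1) with hMdef
  have hMle : ∀ x ∈ Icc (-1:ℝ) 1, h x / p x ≤ M := fun x hx =>
    le_csSup hbdd (mem_image_of_mem _ hx)
  -- main integral inequality
  have int1 : IntervalIntegrable (fun x => 2*c*I*h x + M*(σ2/2)) volume (-1) 1 :=
    (hhi.const_mul _).add intervalIntegrable_const
  have int2 : IntervalIntegrable
      (fun x => σ2/2 * (h x/p x) + M*c*h x + c*I^2*p x) volume (-1) 1 :=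
    ((hint.const_mul (σ2/2)).add (hhi.const_mul (M*c))).add (hpint.const_mul (c*I^2))
  have hmono : ∫ x in (-1:ℝ)..1, (2*c*I*h x + M*(σ2/2))
      ≤ ∫ x in (-1:ℝ)..1, (σ2/2 * (h x/p x) + M*c*h x + c*I^2*p x) :=
    intervalIntegral.integral_mono_on h11 int1 int2
      (fun x hx => aux_pt σ2 c I M (h x) (p x) (ppos x hx) hc (hMle x hx) (hca x hx))
  have hL : ∫ x in (-1:ℝ)..1, (2*c*I*h x + M*(σ2/2)) = 2*c*I*I + 2*(M*(σ2/2)) := by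
    rw [intervalIntegral.integral_add (hhi.const_mul _) intervalIntegrable_const,
      intervalIntegral.integral_const_mul, intervalIntegral.integral_const, ← hIdef]
    norm_num
  have hR : ∫ x in (-1:ℝ)..1, (σ2/2 * (h x/p x) + M*c*h x + c*I^2*p x)
      = σ2/2 * (∫ x in (-1:ℝ)..1, h x / p x) + M*c*I + c*I^2 := by
    rw [intervalIntegral.integral_add ((hint.const_mul (σ2/2)).add (hhi.const_mul (M*c)))
        (hpint.const_mul (c*I^2)),
      intervalIntegral.integral_add (hint.const_mul (σ2/2)) (hhi.const_mul (M*c)),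
      intervalIntegral.integral_const_mul, intervalIntegral.integral_const_mul,
      intervalIntegral.integral_const_mul, hp1, ← hIdef, mul_one]
  rw [hL, hR] at hmono
  -- compute R pstar
  have e1 : ∀ x ∈ Icc (-1:ℝ) 1, h x / pstar x = I := by
    intro x hx
    show h x / (h x / I) = I
    rw [div_div_eq_mul_div, mul_comm, mul_div_assoc, div_self (hpos x hx).ne', mul_one]
  have e2 : ∫ x in (-1:ℝ)..1, h x / pstar x = 2*I := by
    rw [intervalIntegral.integral_congr (g := fun _ => I) (fun x hx => e1 x (hu ▸ hx)),
      intervalIntegral.integral_const]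
    norm_num
  have e3 : sSup ((fun x => h x / pstar x) '' Icc (-1:ℝ) 1) = I := by
    rw [image_congr e1, hIcc_ne.image_const, csSup_singleton]
  -- conclude
  show (σ2 / 2) * (∫ x in (-1:ℝ)..1, h x / pstar x)
      + sSup ((fun x => h x / pstar x) '' Icc (-1) 1)
    ≤ (σ2 / 2) * (∫ x in (-1:ℝ)..1, h x / p x) + M
  rw [e2, e3]
  have hcI : c * I = 1 + σ2 := div_mul_cancel₀ _ hIpos.ne'
  have hMcI : M*(c*I) = M*(1+σ2) := by rw [hcI]
  have hcI2 : c*I^2 = I + σ2*I := by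
    rw [pow_two, ← mul_assoc, hcI]; ring
  nlinarith [hmono, hMcI, hcI2]
end

section
/- For every density π₀ on [-1,1] with π₀ > 0 there exists a density π₀* of the form π₀*(x) = c h₀^{1/2} h^{1/2}(x) on A_{h₀} and π₀*(x) = c h(x) on B_{h₀} (for some h₀ ∈ [h_min, h_max] and normalizing constant c) such that R_{π₀*} ≤ R_{π₀}, where R_π = (σ²/2)∫_{-1}^1 h(x)/π(x) dx + sup_x h(x)/π(x). -/
open MeasureTheory Real Set

/-- for every density `p₀ > 0` on `[-1,1]` there exists a two-piece
density `p₀*` — `p₀*(x) = c √(h₀) √(h(x))` on `A_{h₀} = {h ≤ h₀}` and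
`p₀*(x) = c h(x)` on `B_{h₀} = {h > h₀}`, for some `h₀ ∈ [h_min, h_max]` and
normalizing constant `c` — with `R_{p₀*} ≤ R_{p₀}`, where
`R_p = (σ²/2) ∫ h/p + sup_{x∈[-1,1]} h(x)/p(x)`. -/
theorem stmt_19 (h : ℝ → ℝ) (hcont : ContinuousOn h (Icc (-1) 1))
    (hpos : ∀ x ∈ Icc (-1 : ℝ) 1, 0 < h x)
    (σ2 : ℝ) (hσ2 : 0 ≤ σ2)
    (p0 : ℝ → ℝ) (hmeas : Measurable p0)
    (hp0pos : ∀ x ∈ Icc (-1 : ℝ) 1, 0 < p0 x)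
    (hp0dens : ∫ x in (-1 : ℝ)..1, p0 x = 1)
    (hint : IntervalIntegrable (fun x => h x / p0 x) volume (-1) 1)
    (hbdd : BddAbove ((fun x => h x / p0 x) '' Icc (-1) 1)) :
    let R : (ℝ → ℝ) → ℝ := fun p =>
      (σ2 / 2) * (∫ x in (-1 : ℝ)..1, h x / p x)
        + sSup ((fun x => h x / p x) '' Icc (-1) 1)
    ∃ h0 ∈ Icc (sInf (h '' Icc (-1) 1)) (sSup (h '' Icc (-1) 1)), ∃ c > (0 : ℝ),
      let pstar : ℝ → ℝ := fun x =>
        if h x ≤ h0 then c * Real.sqrt h0 * Real.sqrt (h x) else c * h x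
      (∫ x in (-1 : ℝ)..1, pstar x = 1) ∧ R pstar ≤ R p0 := by
  intro R
  have h10 : (-1:ℝ) ≤ 1 := by norm_num
  have huIcc : uIcc (-1:ℝ) 1 = Icc (-1:ℝ) 1 := uIcc_of_le h10
  have hne : (Icc (-1:ℝ) 1).Nonempty := ⟨0, by norm_num⟩
  have hcmp : IsCompact (h '' Icc (-1:ℝ) 1) := isCompact_Icc.image_of_continuousOn hcont
  have hcmpne : (h '' Icc (-1:ℝ) 1).Nonempty := hne.image h
  set hmn := sInf (h '' Icc (-1:ℝ) 1) with hmn_def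
  set hmx := sSup (h '' Icc (-1:ℝ) 1) with hmx_def
  have hmn_pos : 0 < hmn := by
    obtain ⟨x, hx, hxe⟩ := hcmp.sInf_mem hcmpne
    rw [hmn_def, ← hxe]
    exact hpos x hx
  have hmn_le : ∀ x ∈ Icc (-1:ℝ) 1, hmn ≤ h x := fun x hx => csInf_le hcmp.bddBelow ⟨x, hx, rfl⟩
  have hle_mx : ∀ x ∈ Icc (-1:ℝ) 1, h x ≤ hmx := fun x hx => le_csSup hcmp.bddAbove ⟨x, hx, rfl⟩
  have hmm : hmn ≤ hmx := (hmn_le 0 (by norm_num)).trans (hle_mx 0 (by norm_num))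
  set M := sSup ((fun x => h x / p0 x) '' Icc (-1:ℝ) 1) with hM_def
  have hM : ∀ x ∈ Icc (-1:ℝ) 1, h x / p0 x ≤ M := fun x hx => le_csSup hbdd ⟨x, hx, rfl⟩
  have hMp : ∀ x ∈ Icc (-1:ℝ) 1, h x ≤ M * p0 x := fun x hx =>
    (div_le_iff₀ (hp0pos x hx)).mp (hM x hx)
  have hp0int : IntervalIntegrable p0 volume (-1) 1 := by
    by_contra hcn
    rw [intervalIntegral.integral_undef hcn] at hp0dens
    exact one_ne_zero hp0dens.symm
  -- helper: continuity on Icc gives interval integrability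
  have ii : ∀ {f : ℝ → ℝ}, ContinuousOn f (Icc (-1:ℝ) 1) →
      IntervalIntegrable f volume (-1) 1 := by
    intro f hf
    exact ContinuousOn.intervalIntegrable (by rw [huIcc]; exact hf)
  have hsqc : ContinuousOn (fun x => Real.sqrt (h x)) (Icc (-1:ℝ) 1) :=
    Real.continuous_sqrt.comp_continuousOn hcont
  have hKc : ∀ u : ℝ, ContinuousOn (fun x => max (u * Real.sqrt (h x)) (h x)) (Icc (-1:ℝ) 1) :=
    fun u => (continuousOn_const.mul hsqc).sup hcont
  have hKint : ∀ u : ℝ, IntervalIntegrable (fun x => max (u * Real.sqrt (h x)) (h x))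
      volume (-1) 1 := fun u => ii (hKc u)
  have hhint : IntervalIntegrable h volume (-1) 1 := ii hcont
  have hsqint : IntervalIntegrable (fun x => Real.sqrt (h x)) volume (-1) 1 := ii hsqc
  set S := ∫ x in (-1:ℝ)..1, Real.sqrt (h x) with hS_def
  have hS : 0 ≤ S := intervalIntegral.integral_nonneg h10 (fun x _ => Real.sqrt_nonneg _)
  set J : ℝ → ℝ := fun u => ∫ x in (-1:ℝ)..1, max (u * Real.sqrt (h x)) (h x) with hJ_def
  have hJlip : ∀ u v : ℝ, |J u - J v| ≤ S * |u - v| := by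
    intro u v
    have e1 : J u - J v = ∫ x in (-1:ℝ)..1,
        (max (u * Real.sqrt (h x)) (h x) - max (v * Real.sqrt (h x)) (h x)) := by
      rw [intervalIntegral.integral_sub (hKint u) (hKint v)]
    rw [e1]
    refine (intervalIntegral.abs_integral_le_integral_abs h10).trans ?_
    have hle : ∀ x ∈ Icc (-1:ℝ) 1,
        |max (u * Real.sqrt (h x)) (h x) - max (v * Real.sqrt (h x)) (h x)|
          ≤ |u - v| * Real.sqrt (h x) := by
      intro x hx
      refine (abs_max_sub_max_le_abs _ _ _).trans ?_
      rw [← sub_mul, abs_mul, abs_of_nonneg (Real.sqrt_nonneg _)]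
    have hint1 : IntervalIntegrable (fun x =>
        |max (u * Real.sqrt (h x)) (h x) - max (v * Real.sqrt (h x)) (h x)|) volume (-1) 1 :=
      ((hKint u).sub (hKint v)).abs
    have hint2 : IntervalIntegrable (fun x => |u - v| * Real.sqrt (h x)) volume (-1) 1 :=
      hsqint.const_mul _
    calc ∫ x in (-1:ℝ)..1,
          |max (u * Real.sqrt (h x)) (h x) - max (v * Real.sqrt (h x)) (h x)|
        ≤ ∫ x in (-1:ℝ)..1, |u - v| * Real.sqrt (h x) :=
          intervalIntegral.integral_mono_on h10 hint1 hint2 hle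
      _ = S * |u - v| := by rw [intervalIntegral.integral_const_mul, ← hS_def, mul_comm]
  have hJcont : Continuous J :=
    (LipschitzWith.of_dist_le_mul (K := S.toNNReal) (fun u v => by
      rw [Real.dist_eq, Real.dist_eq, Real.coe_toNNReal S hS]
      exact hJlip u v)).continuous
  set F : ℝ → ℝ := fun t => J (Real.sqrt t) with hF_def
  have hFcont : Continuous F := hJcont.comp Real.continuous_sqrt
  have hFge : ∀ t : ℝ, (∫ x in (-1:ℝ)..1, h x) ≤ F t := fun t =>
    intervalIntegral.integral_mono_on h10 hhint (hKint (Real.sqrt t))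
      (fun x _ => le_max_right _ _)
  have hIh : 0 < ∫ x in (-1:ℝ)..1, h x := by
    have step : ∫ x in (-1:ℝ)..1, hmn ≤ ∫ x in (-1:ℝ)..1, h x :=
      intervalIntegral.integral_mono_on h10 intervalIntegrable_const hhint
        (fun x hx => hmn_le x hx)
    rw [intervalIntegral.integral_const, smul_eq_mul] at step
    nlinarith [hmn_pos]
  have hFmn : F hmn = ∫ x in (-1:ℝ)..1, h x := by
    refine intervalIntegral.integral_congr ?_
    rw [huIcc]
    intro x hx
    have h1 : Real.sqrt hmn * Real.sqrt (h x) ≤ h x := by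
      have h2 := mul_le_mul_of_nonneg_right (Real.sqrt_le_sqrt (hmn_le x hx))
        (Real.sqrt_nonneg (h x))
      rwa [Real.mul_self_sqrt (hpos x hx).le] at h2
    exact max_eq_right h1
  have hIhM : (∫ x in (-1:ℝ)..1, h x) ≤ M := by
    have step := intervalIntegral.integral_mono_on h10 hhint (hp0int.const_mul M) hMp
    rwa [intervalIntegral.integral_const_mul, hp0dens, mul_one] at step
  have hMpos : 0 < M := hIh.trans_le hIhM
  obtain ⟨h0, hh0mem, hFh0M, hfeas⟩ :
      ∃ h0, h0 ∈ Icc hmn hmx ∧ F h0 ≤ M ∧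
        ∀ x ∈ Icc (-1:ℝ) 1, h0 < h x → h x / F h0 ≤ p0 x := by
    by_cases hcase : F hmx ≤ M
    · exact ⟨hmx, ⟨hmm, le_rfl⟩, hcase,
        fun x hx hlt => absurd (hle_mx x hx) (not_le.mpr hlt)⟩
    · have hMm : M ∈ Icc (F hmn) (F hmx) := ⟨hFmn ▸ hIhM, (not_le.mp hcase).le⟩
      obtain ⟨h0, hmem, hFe⟩ := intermediate_value_Icc hmm hFcont.continuousOn hMm
      refine ⟨h0, hmem, hFe.le, fun x hx _ => ?_⟩
      rw [hFe, div_le_iff₀ hMpos]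
      linarith [hMp x hx]
  have hh0pos : 0 < h0 := hmn_pos.trans_le hh0mem.1
  have hF0pos : 0 < F h0 := hIh.trans_le (hFge h0)
  set cc := 1 / F h0 with hcc
  have hccpos : 0 < cc := by rw [hcc]; positivity
  set q : ℝ → ℝ := fun x => max (Real.sqrt h0 * Real.sqrt (h x)) (h x) with hq_def
  have hqF : (∫ x in (-1:ℝ)..1, q x) = F h0 := rfl
  have hqcont : ContinuousOn q (Icc (-1:ℝ) 1) := hKc (Real.sqrt h0)
  have hqint : IntervalIntegrable q volume (-1) 1 := hKint (Real.sqrt h0)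
  have hq_ge : ∀ x ∈ Icc (-1:ℝ) 1, h x ≤ q x := fun x _ => le_max_right _ _
  have hq_pos : ∀ x ∈ Icc (-1:ℝ) 1, 0 < q x := fun x hx => (hpos x hx).trans_le (hq_ge x hx)
  have hccq : ∀ x ∈ Icc (-1:ℝ) 1, 0 < cc * q x := fun x hx => mul_pos hccpos (hq_pos x hx)
  refine ⟨h0, hh0mem, cc, hccpos, ?_⟩
  intro pstar
  have hpstar_def : ∀ x, pstar x =
      if h x ≤ h0 then cc * Real.sqrt h0 * Real.sqrt (h x) else cc * h x := fun x => rfl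
  have hpstarEq : ∀ x ∈ Icc (-1:ℝ) 1, pstar x = cc * q x := by
    intro x hx
    simp only [hpstar_def, hq_def]
    by_cases hxc : h x ≤ h0
    · rw [if_pos hxc, max_eq_left, mul_assoc]
      have h2 := mul_le_mul_of_nonneg_right (Real.sqrt_le_sqrt hxc) (Real.sqrt_nonneg (h x))
      calc h x = Real.sqrt (h x) * Real.sqrt (h x) := (Real.mul_self_sqrt (hpos x hx).le).symm
        _ ≤ Real.sqrt h0 * Real.sqrt (h x) := h2
    · rw [if_neg hxc, max_eq_right]
      have h2 := mul_le_mul_of_nonneg_right (Real.sqrt_le_sqrt (not_le.mp hxc).le)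
        (Real.sqrt_nonneg (h x))
      rwa [Real.mul_self_sqrt (hpos x hx).le] at h2
  have hIpstar : ∫ x in (-1:ℝ)..1, pstar x = 1 := by
    have e : ∫ x in (-1:ℝ)..1, pstar x = ∫ x in (-1:ℝ)..1, cc * q x :=
      intervalIntegral.integral_congr (by rw [huIcc]; intro x hx; exact hpstarEq x hx)
    rw [e, intervalIntegral.integral_const_mul, hqF, hcc]
    field_simp
  have hsup : ∀ x ∈ Icc (-1:ℝ) 1, h x / pstar x ≤ M := by
    intro x hx
    have hps : cc * h x ≤ pstar x := by
      rw [hpstarEq x hx]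
      exact mul_le_mul_of_nonneg_left (hq_ge x hx) hccpos.le
    have hppos : 0 < pstar x := lt_of_lt_of_le (mul_pos hccpos (hpos x hx)) hps
    rw [div_le_iff₀ hppos]
    calc h x = F h0 * (cc * h x) := by rw [hcc]; field_simp
      _ ≤ F h0 * pstar x := mul_le_mul_of_nonneg_left hps hF0pos.le
      _ ≤ M * pstar x := mul_le_mul_of_nonneg_right hFh0M hppos.le
  -- integrability of the auxiliary functions
  have hφcont : ContinuousOn (fun x => h x / (cc * q x)) (Icc (-1:ℝ) 1) :=
    hcont.div (continuousOn_const.mul hqcont) (fun x hx => (hccq x hx).ne')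
  have hφint : IntervalIntegrable (fun x => h x / (cc * q x)) volume (-1) 1 := ii hφcont
  have hψcont : ContinuousOn (fun x => h x / (cc * q x) ^ 2) (Icc (-1:ℝ) 1) :=
    hcont.div ((continuousOn_const.mul hqcont).pow 2)
      (fun x hx => pow_ne_zero 2 (hccq x hx).ne')
  have hψint : IntervalIntegrable (fun x => p0 x * (h x / (cc * q x) ^ 2)) volume (-1) 1 :=
    hp0int.mul_continuousOn (by rw [huIcc]; exact hψcont)
  have hρint : IntervalIntegrable (fun x => (cc * q x - p0 x) / (cc ^ 2 * h0)) volume (-1) 1 :=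
    ((hqint.const_mul cc).sub hp0int).div_const _
  -- pointwise AM-GM
  have hpt1 : ∀ x ∈ Icc (-1:ℝ) 1,
      2 * (h x / (cc * q x)) - p0 x * (h x / (cc * q x) ^ 2) ≤ h x / p0 x := by
    intro x hx
    have hd := hccq x hx
    have hp := hp0pos x hx
    have hh := hpos x hx
    have e : h x / p0 x - (2 * (h x / (cc * q x)) - p0 x * (h x / (cc * q x) ^ 2))
        = h x * (cc * q x - p0 x) ^ 2 / (p0 x * (cc * q x) ^ 2) := by
      have hq0 : q x ≠ 0 := (hq_pos x hx).ne'
      field_simp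
      ring
    have e2 : 0 ≤ h x * (cc * q x - p0 x) ^ 2 / (p0 x * (cc * q x) ^ 2) :=
      div_nonneg (mul_nonneg hh.le (sq_nonneg _)) (mul_nonneg hp.le (sq_nonneg _))
    linarith [e2, e.ge, e.le]
  -- pointwise lower bound by the affine function
  have hpt2 : ∀ x ∈ Icc (-1:ℝ) 1,
      (cc * q x - p0 x) / (cc ^ 2 * h0)
        ≤ h x / (cc * q x) - p0 x * (h x / (cc * q x) ^ 2) := by
    intro x hx
    have hd := hccq x hx
    have hp := hp0pos x hx
    have hh := hpos x hx
    have e : h x / (cc * q x) - p0 x * (h x / (cc * q x) ^ 2)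
        = (cc * q x - p0 x) * (h x / (cc * q x) ^ 2) := by
      field_simp
    rw [e]
    by_cases hxc : h x ≤ h0
    · have hqx : q x = Real.sqrt h0 * Real.sqrt (h x) := by
        rw [hq_def]
        refine max_eq_left ?_
        have h2 := mul_le_mul_of_nonneg_right (Real.sqrt_le_sqrt hxc) (Real.sqrt_nonneg (h x))
        calc h x = Real.sqrt (h x) * Real.sqrt (h x) := (Real.mul_self_sqrt hh.le).symm
          _ ≤ Real.sqrt h0 * Real.sqrt (h x) := h2
      have e2 : h x / (cc * q x) ^ 2 = 1 / (cc ^ 2 * h0) := by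
        rw [hqx]
        have : (cc * (Real.sqrt h0 * Real.sqrt (h x))) ^ 2 = cc ^ 2 * (h0 * h x) := by
          rw [mul_pow, mul_pow, Real.sq_sqrt hh0pos.le, Real.sq_sqrt hh.le]
        rw [this]
        field_simp
      rw [e2, mul_one_div]
    · have hlt : h0 < h x := not_le.mp hxc
      have hqx : q x = h x := by
        rw [hq_def]
        refine max_eq_right ?_
        have h2 := mul_le_mul_of_nonneg_right (Real.sqrt_le_sqrt hlt.le)
          (Real.sqrt_nonneg (h x))
        rwa [Real.mul_self_sqrt hh.le] at h2
      have hfe : cc * q x - p0 x ≤ 0 := by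
        have h3 := hfeas x hx hlt
        have e3 : cc * h x = h x / F h0 := by rw [hcc]; ring
        rw [hqx]
        linarith [e3.le, e3.ge, h3]
      have hmono : h x / (cc * q x) ^ 2 ≤ 1 / (cc ^ 2 * h0) := by
        rw [hqx]
        have e4 : h x / (cc * h x) ^ 2 = 1 / (cc ^ 2 * h x) := by
          rw [mul_pow]
          field_simp
        rw [e4]
        exact one_div_le_one_div_of_le (by positivity)
          (by nlinarith [hh0pos, sq_nonneg cc])
      calc (cc * q x - p0 x) / (cc ^ 2 * h0)
          = (cc * q x - p0 x) * (1 / (cc ^ 2 * h0)) := by rw [mul_one_div]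
        _ ≤ (cc * q x - p0 x) * (h x / (cc * q x) ^ 2) :=
            mul_le_mul_of_nonpos_left hmono hfe
  have hIρ : ∫ x in (-1:ℝ)..1, (cc * q x - p0 x) / (cc ^ 2 * h0) = 0 := by
    rw [intervalIntegral.integral_div,
      intervalIntegral.integral_sub (hqint.const_mul cc) hp0int,
      intervalIntegral.integral_const_mul, hp0dens, hqF, hcc]
    field_simp
    ring
  have hI1 : (∫ x in (-1:ℝ)..1,
        (2 * (h x / (cc * q x)) - p0 x * (h x / (cc * q x) ^ 2)))
      ≤ ∫ x in (-1:ℝ)..1, h x / p0 x :=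
    intervalIntegral.integral_mono_on h10 ((hφint.const_mul 2).sub hψint) hint hpt1
  have hI2 : (∫ x in (-1:ℝ)..1, (cc * q x - p0 x) / (cc ^ 2 * h0))
      ≤ ∫ x in (-1:ℝ)..1,
        (h x / (cc * q x) - p0 x * (h x / (cc * q x) ^ 2)) :=
    intervalIntegral.integral_mono_on h10 hρint (hφint.sub hψint) hpt2
  have hsplit1 : (∫ x in (-1:ℝ)..1,
        (2 * (h x / (cc * q x)) - p0 x * (h x / (cc * q x) ^ 2)))
      = 2 * (∫ x in (-1:ℝ)..1, h x / (cc * q x))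
        - ∫ x in (-1:ℝ)..1, p0 x * (h x / (cc * q x) ^ 2) := by
    rw [intervalIntegral.integral_sub (hφint.const_mul 2) hψint,
      intervalIntegral.integral_const_mul]
  have hsplit2 : (∫ x in (-1:ℝ)..1,
        (h x / (cc * q x) - p0 x * (h x / (cc * q x) ^ 2)))
      = (∫ x in (-1:ℝ)..1, h x / (cc * q x))
        - ∫ x in (-1:ℝ)..1, p0 x * (h x / (cc * q x) ^ 2) := by
    rw [intervalIntegral.integral_sub hφint hψint]
  have hIφ_le : (∫ x in (-1:ℝ)..1, h x / (cc * q x)) ≤ ∫ x in (-1:ℝ)..1, h x / p0 x := by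
    rw [hIρ] at hI2
    rw [hsplit2] at hI2
    rw [hsplit1] at hI1
    linarith
  refine ⟨hIpstar, ?_⟩
  show (σ2 / 2) * (∫ x in (-1:ℝ)..1, h x / pstar x)
      + sSup ((fun x => h x / pstar x) '' Icc (-1) 1)
    ≤ (σ2 / 2) * (∫ x in (-1:ℝ)..1, h x / p0 x)
      + sSup ((fun x => h x / p0 x) '' Icc (-1) 1)
  have hIeq : (∫ x in (-1:ℝ)..1, h x / pstar x) = ∫ x in (-1:ℝ)..1, h x / (cc * q x) := by
    refine intervalIntegral.integral_congr ?_
    rw [huIcc]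
    intro x hx
    simp only
    rw [hpstarEq x hx]
  have hsupb : sSup ((fun x => h x / pstar x) '' Icc (-1:ℝ) 1) ≤ M :=
    csSup_le (hne.image _) (by rintro y ⟨x, hx, rfl⟩; exact hsup x hx)
  rw [hIeq, ← hM_def]
  exact add_le_add (mul_le_mul_of_nonneg_left hIφ_le (by positivity)) hsupb
end
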